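/- Let n ≥ 1 and let G be a simple graph on the vertex set {1, …, n} (formally Fin n, with its natural linear order). Work over the alphabet Σ consisting of one symbol per vertex plus three special symbols #, $, γ. For a vertex i, write ⟨i..n⟩ for the word listing the vertex symbols i, …, n in increasing order, ⟨1..i−1⟩ for the word listing 1, …, i−1 (empty if i = 1), and N = ⟨1..n⟩. Let S = (i₁, …, i_r) be a finite list of vertices, let T_S = $ N # i₁ # N # i₂ # N # ⋯ # i_r # N $, and let T = T_S γ T_S. Define the dictionary language D ⊆ Σ* whose words are: (a) ⟨i..n⟩ # j # ⟨1..i−1⟩ for every ordered pair (i, j) of adjacent vertices of G; (b) $ ⟨1..i−1⟩ for every vertex i; (c) ⟨i..n⟩ $ for every vertex i; (d) ⟨i..n⟩ $ γ $ ⟨1..j−1⟩ for every ordered pair (i, j) of adjacent vertices of G. Then T ∈ D* if and only if there exist vertices i and j with i adjacent to j in G, i adjacent to every vertex occurring in S, and j adjacent to every vertex occurring in S (i.e., S ∪ {i, j} extends to a clique if S is a clique). (This is the correctness of the simplified k-clique gadget in the reduction of Theorem 8 from k-Clique to Word Break.) -/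

import Mathlib

open Computability

namespace CliqueGadget

variable {n : ℕ}

/-- The special symbol `#`. -/
def hash : Fin n ⊕ Fin 3 := Sum.inr 0

/-- The special symbol `$`. -/
def dollar : Fin n ⊕ Fin 3 := Sum.inr 1

/-- The special symbol `γ`. -/
def gam : Fin n ⊕ Fin 3 := Sum.inr 2

/-- `⟨i..n⟩`: the word listing the vertex symbols `i, i+1, …, n` in increasing order. -/
def fromTo (i : Fin n) : List (Fin n ⊕ Fin 3) :=
  ((List.finRange n).filter fun v => decide (i ≤ v)).map Sum.inl

/-- `⟨1..i-1⟩`: the word listing the vertex symbols `1, …, i-1` in increasing order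
(empty if `i` is the first vertex). -/
def upTo (i : Fin n) : List (Fin n ⊕ Fin 3) :=
  ((List.finRange n).filter fun v => decide (v < i)).map Sum.inl

/-- `N = ⟨1..n⟩`: the word listing all vertex symbols in increasing order. -/
def allV (n : ℕ) : List (Fin n ⊕ Fin 3) := (List.finRange n).map Sum.inl

/-- The string `T_S = $ N # i₁ # N # i₂ # N # ⋯ # i_r # N $` for `S = (i₁, …, i_r)`. -/
def TS (S : List (Fin n)) : List (Fin n ⊕ Fin 3) :=
  [dollar] ++ allV n ++ (S.map fun v => [hash, Sum.inl v, hash] ++ allV n).flatten ++ [dollar]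

/-- The dictionary: (a) `⟨i..n⟩ # j # ⟨1..i-1⟩` for adjacent `i, j`;
(b) `$ ⟨1..i-1⟩` for every vertex `i`; (c) `⟨i..n⟩ $` for every vertex `i`;
(d) `⟨i..n⟩ $ γ $ ⟨1..j-1⟩` for adjacent `i, j`. -/
def dict (G : SimpleGraph (Fin n)) : Language (Fin n ⊕ Fin 3) :=
  {w | (∃ i j : Fin n, G.Adj i j ∧ w = fromTo i ++ [hash, Sum.inl j, hash] ++ upTo i) ∨
    (∃ i : Fin n, w = dollar :: upTo i) ∨
    (∃ i : Fin n, w = fromTo i ++ [dollar]) ∨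
    (∃ i j : Fin n, G.Adj i j ∧ w = fromTo i ++ [dollar, gam, dollar] ++ upTo j)}

lemma fromTo_eq (i : Fin n) : fromTo i = ((List.finRange n).drop i.val).map Sum.inl := by
  unfold fromTo
  congr 1
  have h : List.finRange n = (List.finRange n).take i.val ++ (List.finRange n).drop i.val :=
    (List.take_append_drop _ _).symm
  conv_lhs => rw [h]
  rw [List.filter_append]
  have h1 : ((List.finRange n).take i.val).filter (fun v => decide (i ≤ v)) = [] := by
    rw [List.filter_eq_nil_iff]
    intro a ha
    simp only [decide_eq_true_eq]
    rw [List.mem_iff_getElem] at ha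
    obtain ⟨k, hk, hak⟩ := ha
    have hlen : k < i.val := lt_of_lt_of_le hk (by simp [List.length_take])
    have : a = ⟨k, by omega⟩ := by
      rw [← hak]; simp [List.getElem_take]
    intro hle
    rw [this] at hle
    exact absurd hle (by simp [Fin.le_def]; omega)
  have h2 : ((List.finRange n).drop i.val).filter (fun v => decide (i ≤ v)) =
      (List.finRange n).drop i.val := by
    rw [List.filter_eq_self]
    intro a ha
    simp only [decide_eq_true_eq]
    rw [List.mem_iff_getElem] at ha
    obtain ⟨k, hk, hak⟩ := ha
    rw [List.getElem_drop] at hak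
    rw [← hak]
    simp [Fin.le_def]
  rw [h1, h2, List.nil_append]

lemma upTo_eq (i : Fin n) : upTo i = ((List.finRange n).take i.val).map Sum.inl := by
  unfold upTo
  congr 1
  have h : List.finRange n = (List.finRange n).take i.val ++ (List.finRange n).drop i.val :=
    (List.take_append_drop _ _).symm
  conv_lhs => rw [h]
  rw [List.filter_append]
  have h1 : ((List.finRange n).take i.val).filter (fun v => decide (v < i)) =
      (List.finRange n).take i.val := by
    rw [List.filter_eq_self]
    intro a ha
    simp only [decide_eq_true_eq]
    rw [List.mem_iff_getElem] at ha
    obtain ⟨k, hk, hak⟩ := ha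
    have hlen : k < i.val := lt_of_lt_of_le hk (by simp [List.length_take])
    rw [← hak]; simp [List.getElem_take, Fin.lt_def]; omega
  have h2 : ((List.finRange n).drop i.val).filter (fun v => decide (v < i)) = [] := by
    rw [List.filter_eq_nil_iff]
    intro a ha
    simp only [decide_eq_true_eq]
    rw [List.mem_iff_getElem] at ha
    obtain ⟨k, hk, hak⟩ := ha
    rw [List.getElem_drop] at hak
    rw [← hak]
    simp [Fin.lt_def]
  rw [h1, h2, List.append_nil]

lemma upTo_append_fromTo (i : Fin n) : upTo i ++ fromTo i = allV n := by
  rw [upTo_eq, fromTo_eq, ← List.map_append, List.take_append_drop]; rfl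

lemma upTo_append_fromTo' (i : Fin n) (X : List (Fin n ⊕ Fin 3)) :
    upTo i ++ (fromTo i ++ X) = allV n ++ X := by
  rw [← List.append_assoc, upTo_append_fromTo]

lemma fromTo_head (i : Fin n) :
    fromTo i = Sum.inl i :: ((List.finRange n).drop (i.val+1)).map Sum.inl := by
  rw [fromTo_eq]
  rw [List.drop_eq_getElem_cons (by simp [i.isLt])]
  simp

/-- `segs S` is `# v₁ # N # v₂ # N ⋯ # v_r # N`. -/
def segs (S : List (Fin n)) : List (Fin n ⊕ Fin 3) :=
  (S.map fun v => [hash, Sum.inl v, hash] ++ allV n).flatten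

lemma segs_nil : segs ([] : List (Fin n)) = [] := rfl

lemma segs_cons (v : Fin n) (S : List (Fin n)) :
    segs (v :: S) = hash :: Sum.inl v :: hash :: (allV n ++ segs S) := by
  simp [segs]

/-- No word of the dictionary starts with `γ`. -/
lemma no_gam (G : SimpleGraph (Fin n)) :
    ∀ L : List (List (Fin n ⊕ Fin 3)), (∀ y ∈ L, y ∈ dict G) →
      ∀ rest, L.flatten ≠ gam :: rest := by
  intro L
  induction L with
  | nil => intro _ rest h; simp at h
  | cons w L' ih =>
    intro hL rest h
    have hw := hL w List.mem_cons_self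
    rcases hw with ⟨i, j, _, rfl⟩ | ⟨i, rfl⟩ | ⟨i, rfl⟩ | ⟨i, j, _, rfl⟩ <;>
      rw [List.flatten_cons] at h <;>
      first
      | (rw [fromTo_head] at h;
         simp only [List.cons_append, List.append_assoc, List.cons.injEq] at h;
         exact absurd h.1 (by simp [gam]))
      | (simp only [List.cons_append, List.cons.injEq] at h;
         exact absurd h.1 (by simp [gam, dollar]))

/-- Second half invariant. -/
lemma second_half (G : SimpleGraph (Fin n)) :
    ∀ L : List (List (Fin n ⊕ Fin 3)), ∀ (j : Fin n) (S₁ : List (Fin n)),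
      (∀ y ∈ L, y ∈ dict G) →
      fromTo j ++ (segs S₁ ++ [dollar]) = L.flatten →
      ∀ v ∈ S₁, G.Adj j v := by
  intro L
  induction L with
  | nil =>
    intro j S₁ _ h
    rw [fromTo_head] at h
    simp at h
  | cons w L' ih =>
    intro j S₁ hL h v hv
    have hw := hL w List.mem_cons_self
    rw [List.flatten_cons] at h
    rcases hw with ⟨i, j', hadj, rfl⟩ | ⟨i, rfl⟩ | ⟨i, rfl⟩ | ⟨i, j', hadj, rfl⟩
    · -- case (a)
      rw [fromTo_head j, fromTo_head i] at h
      simp only [List.cons_append, List.append_assoc, List.cons.injEq, Sum.inl.injEq] at h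
      obtain ⟨rfl, h⟩ := h
      have h2 := List.append_cancel_left h
      -- h2 : [hash, inl j', hash] ++ (upTo i ++ L'.flatten) = segs S₁ ++ [dollar]
      cases S₁ with
      | nil => simp at hv
      | cons v' S₂ =>
        simp only [segs_cons, List.cons_append,
          List.append_assoc, List.cons.injEq, Sum.inl.injEq, hash] at h2
        obtain ⟨-, rfl, -, h2⟩ := h2
        rw [← upTo_append_fromTo' j] at h2
        have h3 := List.append_cancel_left h2
        rcases List.mem_cons.mp hv with rfl | hv'
        · exact hadj
        · exact ih j S₂ (fun y hy => hL y (List.mem_cons_of_mem _ hy))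
            h3 v hv'
    · -- case (b): starts with dollar, contradiction
      rw [fromTo_head j] at h
      simp only [List.cons_append, List.cons.injEq] at h
      exact absurd h.1 (by simp [dollar])
    · -- case (c): w = fromTo i ++ [dollar]
      rw [fromTo_head j, fromTo_head i] at h
      simp only [List.cons_append, List.append_assoc, List.cons.injEq, Sum.inl.injEq] at h
      obtain ⟨rfl, h⟩ := h
      have h2 := List.append_cancel_left h
      cases S₁ with
      | nil => simp at hv
      | cons v' S₂ =>
        simp only [segs_cons, List.cons_append,
          List.append_assoc, List.cons.injEq] at h2
        exact absurd h2.1 (by simp [dollar, hash])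
    · -- case (d)
      rw [fromTo_head j, fromTo_head i] at h
      simp only [List.cons_append, List.append_assoc, List.cons.injEq, Sum.inl.injEq] at h
      obtain ⟨rfl, h⟩ := h
      have h2 := List.append_cancel_left h
      cases S₁ with
      | nil => simp at hv
      | cons v' S₂ =>
        simp only [segs_cons, List.cons_append,
          List.append_assoc, List.cons.injEq] at h2
        exact absurd h2.1 (by simp [dollar, hash])

/-- First half invariant. -/
lemma first_half (G : SimpleGraph (Fin n)) (S : List (Fin n)) :
    ∀ L : List (List (Fin n ⊕ Fin 3)), ∀ (i : Fin n) (S₁ : List (Fin n)),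
      (∀ y ∈ L, y ∈ dict G) →
      fromTo i ++ (segs S₁ ++ (dollar :: gam :: dollar :: (allV n ++ (segs S ++ [dollar]))))
        = L.flatten →
      (∀ v ∈ S₁, G.Adj i v) ∧ ∃ j, G.Adj i j ∧ ∀ v ∈ S, G.Adj j v := by
  intro L
  induction L with
  | nil =>
    intro i S₁ _ h
    rw [fromTo_head] at h
    simp at h
  | cons w L' ih =>
    intro i S₁ hL h
    have hw := hL w List.mem_cons_self
    rw [List.flatten_cons] at h
    rcases hw with ⟨i', j', hadj, rfl⟩ | ⟨i', rfl⟩ | ⟨i', rfl⟩ | ⟨i', j', hadj, rfl⟩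
    · -- case (a)
      rw [fromTo_head i, fromTo_head i'] at h
      simp only [List.cons_append, List.append_assoc, List.cons.injEq, Sum.inl.injEq] at h
      obtain ⟨rfl, h⟩ := h
      have h2 := List.append_cancel_left h
      cases S₁ with
      | nil =>
        simp only [segs_nil, List.nil_append,
          List.cons_append, List.cons.injEq] at h2
        exact absurd h2.1 (by simp [dollar, hash])
      | cons v' S₂ =>
        simp only [segs_cons, List.cons_append,
          List.append_assoc, List.cons.injEq, Sum.inl.injEq, hash] at h2
        obtain ⟨-, rfl, -, h2⟩ := h2
        rw [← upTo_append_fromTo' i] at h2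
        have h3 := List.append_cancel_left h2
        obtain ⟨hrest, hj⟩ := ih i S₂ (fun y hy => hL y (List.mem_cons_of_mem _ hy))
          h3
        refine ⟨fun v hv => ?_, hj⟩
        rcases List.mem_cons.mp hv with rfl | hv'
        · exact hadj
        · exact hrest v hv'
    · -- case (b): starts with dollar, contradiction
      rw [fromTo_head i] at h
      simp only [List.cons_append, List.cons.injEq] at h
      exact absurd h.1 (by simp [dollar])
    · -- case (c): w = fromTo i' ++ [dollar]
      rw [fromTo_head i, fromTo_head i'] at h
      simp only [List.cons_append, List.append_assoc, List.cons.injEq, Sum.inl.injEq] at h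
      obtain ⟨rfl, h⟩ := h
      have h2 := List.append_cancel_left h
      cases S₁ with
      | nil =>
        simp only [segs_nil, List.nil_append,
          List.cons_append, List.cons.injEq] at h2
        exact absurd h2.2.symm
          (no_gam G L' (fun y hy => hL y (List.mem_cons_of_mem _ hy)) _)
      | cons v' S₂ =>
        simp only [segs_cons, List.cons_append,
          List.append_assoc, List.cons.injEq] at h2
        exact absurd h2.1 (by simp [dollar, hash])
    · -- case (d)
      rw [fromTo_head i, fromTo_head i'] at h
      simp only [List.cons_append, List.append_assoc, List.cons.injEq, Sum.inl.injEq] at h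
      obtain ⟨rfl, h⟩ := h
      have h2 := List.append_cancel_left h
      cases S₁ with
      | nil =>
        simp only [segs_nil, List.nil_append,
          List.cons_append, List.cons.injEq] at h2
        obtain ⟨-, -, -, h2⟩ := h2
        rw [← upTo_append_fromTo' j'] at h2
        have h3 := List.append_cancel_left h2
        refine ⟨by simp, j', hadj, ?_⟩
        exact second_half G L' j' S (fun y hy => hL y (List.mem_cons_of_mem _ hy))
          h3
      | cons v' S₂ =>
        simp only [segs_cons, List.cons_append,
          List.append_assoc, List.cons.injEq] at h2
        exact absurd h2.1 (by simp [dollar, hash])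

/-- Flatten of a run of type (a) tiles. -/
lemma tiles_flatten (i : Fin n) (S : List (Fin n)) (X : List (Fin n ⊕ Fin 3)) :
    (S.map fun v => fromTo i ++ hash :: Sum.inl v :: hash :: upTo i).flatten ++ (fromTo i ++ X)
      = fromTo i ++ (segs S ++ X) := by
  induction S generalizing X with
  | nil => simp [segs]
  | cons v S' ih =>
    simp only [List.map_cons, List.flatten_cons, segs, List.append_assoc] at *
    rw [ih]
    simp [upTo_append_fromTo', List.append_assoc]

theorem clique_gadget_correct (n : ℕ) (hn : 1 ≤ n) (G : SimpleGraph (Fin n))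
    (S : List (Fin n)) :
    (TS S ++ [gam] ++ TS S) ∈ (dict G)∗ ↔
      ∃ i j : Fin n, G.Adj i j ∧ (∀ v ∈ S, G.Adj i v) ∧ (∀ v ∈ S, G.Adj j v) := by
  constructor
  · intro hmem
    rw [Language.mem_kstar] at hmem
    obtain ⟨L, hflat, hL⟩ := hmem
    cases L with
    | nil => simp [TS, dollar] at hflat
    | cons w L' =>
      rw [List.flatten_cons] at hflat
      have hw := hL w List.mem_cons_self
      rcases hw with ⟨i', j', hadj, rfl⟩ | ⟨i', rfl⟩ | ⟨i', rfl⟩ | ⟨i', j', hadj, rfl⟩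
      · rw [fromTo_head i'] at hflat
        simp only [TS, List.cons_append, List.append_assoc, List.cons.injEq] at hflat
        exact absurd hflat.1.symm (by simp [dollar])
      · -- first word is type (b)
        simp only [TS, List.cons_append, List.append_assoc, List.cons.injEq,
          List.singleton_append, List.nil_append] at hflat
        obtain ⟨-, hflat⟩ := hflat
        rw [← upTo_append_fromTo' i'] at hflat
        have h3 := List.append_cancel_left hflat
        obtain ⟨hi, j, hadj, hj⟩ := first_half G S L' i' S
          (fun y hy => hL y (List.mem_cons_of_mem _ hy))
          (by rw [← h3]; simp [segs, List.append_assoc])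
        exact ⟨i', j, hadj, hi, hj⟩
      · rw [fromTo_head i'] at hflat
        simp only [TS, List.cons_append, List.append_assoc, List.cons.injEq] at hflat
        exact absurd hflat.1.symm (by simp [dollar])
      · rw [fromTo_head i'] at hflat
        simp only [TS, List.cons_append, List.append_assoc, List.cons.injEq] at hflat
        exact absurd hflat.1.symm (by simp [dollar])
  · rintro ⟨i, j, hadj, hi, hj⟩
    rw [Language.mem_kstar]
    refine ⟨(dollar :: upTo i) ::
      ((S.map fun v => fromTo i ++ [hash, Sum.inl v, hash] ++ upTo i) ++
      ([fromTo i ++ [dollar, gam, dollar] ++ upTo j] ++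
      ((S.map fun v => fromTo j ++ [hash, Sum.inl v, hash] ++ upTo j) ++
      [fromTo j ++ [dollar]]))), ?_, ?_⟩
    · simp only [List.flatten_cons, List.flatten_append, List.flatten_cons,
        List.flatten_nil, List.append_nil, List.append_assoc, List.cons_append,
        List.nil_append]
      rw [tiles_flatten j S [dollar], upTo_append_fromTo' j,
        tiles_flatten i S (dollar :: gam :: dollar :: (allV n ++ (segs S ++ [dollar]))),
        upTo_append_fromTo' i]
      simp [TS, segs, List.append_assoc]
    · intro y hy
      simp only [List.mem_cons, List.mem_append, List.mem_map, List.mem_singleton,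
        List.not_mem_nil, or_false] at hy
      rcases hy with rfl | ⟨v, hv, rfl⟩ | rfl | ⟨v, hv, rfl⟩ | rfl
      · exact Or.inr (Or.inl ⟨i, rfl⟩)
      · exact Or.inl ⟨i, v, hi v hv, rfl⟩
      · exact Or.inr (Or.inr (Or.inr ⟨i, j, hadj, rfl⟩))
      · exact Or.inl ⟨j, v, hj v hv, rfl⟩
      · exact Or.inr (Or.inr (Or.inl ⟨j, rfl⟩))

end CliqueGadget
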